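/- For every finitely supported permutation w, the Schubert polynomials satisfy the recursion 𝔖_w = R₁𝔖_w + Σ_{i ∈ Des(w)} x_i·R_i(𝔖_{w s_i}), and also the variant 𝔖_w = R₁𝔖_w + Σ_{i ∈ Des(w)} x_i·R_{i+1}(𝔖_{w s_i}). -/
import Mathlib


/-
Conventions: `Pol = MvPolynomial ℕ ℤ` with the Lean variable `X i` representing
the paper's variable `x_{i+1}` (0-indexed).  All operators carrying a paper index
`i ≥ 1` are represented by Lean operators indexed by `i : ℕ` (Lean `i` ↔ paper `i+1`),
and sequences of positive integers are represented by sequences of natural numbers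
(entry `v` ↔ paper entry `v+1`).
-/

open MvPolynomial
open scoped Classical

abbrev Pol := MvPolynomial ℕ ℤ

noncomputable section

/-- Interchange the variables `x_{i+1}` and `x_{i+2}` (paper indexing). -/
def swapVar (i : ℕ) (f : Pol) : Pol := rename (Equiv.swap i (i+1)) f

/-- Exact division: the unique `g` with `d * g = f` when it exists (`0` otherwise). -/
def exactDiv (d f : Pol) : Pol := if h : ∃ g : Pol, d * g = f then h.choose else 0

/-- The divided difference operator `∂_{i+1}` (paper indexing). -/
def ddiff (i : ℕ) (f : Pol) : Pol := exactDiv (X i - X (i+1)) (f - swapVar i f)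

/-- The Bergeron–Sottile operator `R_{i+1}` (paper indexing): `x_j ↦ x_j` for
`j < i+1`, `x_{i+1} ↦ 0`, `x_j ↦ x_{j-1}` for `j > i+1`. -/
def BS (i : ℕ) : Pol →ₐ[ℤ] Pol :=
  aeval fun j => if j < i then X j else if j = i then 0 else X (j-1)

/-- `m`-fold iterate of `BS i`. -/
def BSit (i m : ℕ) (f : Pol) : Pol := (fun g => BS i g)^[m] f

/-- `Z g = Σ_{k ≥ 0} R₁ᵏ g`. -/
def Zop (f : Pol) : Pol := ∑ᶠ k : ℕ, BSit 0 k f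

/-- `Z^{(m)} g = Σ_{k ≥ 0} R₁^{km} g`. -/
def Zm (m : ℕ) (f : Pol) : Pol := ∑ᶠ k : ℕ, BSit 0 (k * m) f

/-- The truncation operator keeping the first `n` variables: `Π_n` in paper indexing. -/
def truncOp (n : ℕ) : Pol →ₐ[ℤ] Pol := aeval fun j => if j < n then X j else 0

/-- The quasisymmetric divided difference `T_{i+1}` defined as the exact quotient
`((R_{i+2} - R_{i+1})f)/x_{i+1}` (paper indexing). -/
def TqDiv (i : ℕ) (f : Pol) : Pol := exactDiv (X i) (BS (i+1) f - BS i f)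

/-- The quasisymmetric divided difference `T_{i+1} = R_{i+1} ∘ ∂_{i+1}` (paper indexing). -/
def Tq (i : ℕ) (f : Pol) : Pol := BS i (ddiff i f)

/-- The `m`-quasisymmetric divided difference `T^{(m)}_{i+1}` (paper indexing). -/
def Tm (m i : ℕ) (f : Pol) : Pol := exactDiv (X i) (BSit (i+1) m f - BSit i m f)

/-- The slide extractor `D_{i+1} = Π_{i+1} ∘ ∂_{i+1}` (paper indexing). -/
def Dop (i : ℕ) (f : Pol) : Pol := truncOp (i+1) (ddiff i f)

/-- The `m`-slide extractor `D^{(m)}_{i+1} = Π_{i+1} ∘ T^{(m)}_{i+1}` (paper indexing). -/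
def Dm (m i : ℕ) (f : Pol) : Pol := truncOp (i+1) (Tm m i f)

/-- The slide creator `B_{i+1} f = Σ_{k=1}^{i+1} x_k · R_k^{i+1-k}(Π_{i+1} f)` (paper indexing). -/
def Bop (i : ℕ) (f : Pol) : Pol :=
  ∑ k ∈ Finset.range (i+1), X k * BSit k (i - k) (truncOp (i+1) f)

/-- The creation operator `Z ∘ x_{i+1} ∘ R_{i+1}` (paper indexing). -/
def crea (i : ℕ) (f : Pol) : Pol := Zop (X i * BS i f)

/-- A permutation of `{0,1,2,…}` is finitely supported if it fixes all but
finitely many points. -/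
def FinSupp (w : Equiv.Perm ℕ) : Prop := Set.Finite {x | w x ≠ x}

/-- Coxeter length: the minimal `k` such that `w` is a product of `k` simple
transpositions. -/
def len (w : Equiv.Perm ℕ) : ℕ :=
  sInf {k | ∃ l : List ℕ, l.length = k ∧ (l.map fun i => Equiv.swap i (i+1)).prod = w}

/-- The set of reduced words for `w`. -/
def Red (w : Equiv.Perm ℕ) : Set (List ℕ) :=
  {l | l.length = len w ∧ (l.map fun i => Equiv.swap i (i+1)).prod = w}

/-- A family of polynomials indexed by permutations is a family of Schubert
polynomials if: each member is homogeneous of degree the length, the identity is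
sent to `1`, and divided differences act as expected (all this for finitely
supported permutations). -/
def IsSchubertFamily (S : Equiv.Perm ℕ → Pol) : Prop :=
  (∀ w, FinSupp w → (S w).IsHomogeneous (len w)) ∧
  S 1 = 1 ∧
  ∀ w, FinSupp w → ∀ i : ℕ,
    ddiff i (S w) = if w (i+1) < w i then S (w * Equiv.swap i (i+1)) else 0

/-- `b` is a compatible sequence for `a`. -/
def Compat {k : ℕ} (a b : Fin k → ℕ) : Prop :=
  Monotone b ∧ (∀ j, b j ≤ a j) ∧
  ∀ (j : ℕ) (h : j + 1 < k),
    a ⟨j, Nat.lt_of_succ_lt h⟩ < a ⟨j+1, h⟩ → b ⟨j, Nat.lt_of_succ_lt h⟩ < b ⟨j+1, h⟩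

/-- The slide polynomial `𝔉_a`, as the sum of the monomials of all compatible
sequences for `a`. -/
def slide {k : ℕ} (a : Fin k → ℕ) : Pol :=
  ∑ᶠ b ∈ {b : Fin k → ℕ | Compat a b}, ∏ j, X (b j)

/-- `b` is an `m`-compatible sequence for `a` (entrywise congruent mod `m`). -/
def MCompat (m : ℕ) {k : ℕ} (a b : Fin k → ℕ) : Prop :=
  Monotone b ∧ (∀ j, b j ≤ a j ∧ b j % m = a j % m) ∧
  ∀ (j : ℕ) (h : j + 1 < k),
    a ⟨j, Nat.lt_of_succ_lt h⟩ < a ⟨j+1, h⟩ → b ⟨j, Nat.lt_of_succ_lt h⟩ < b ⟨j+1, h⟩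

/-- The `m`-slide polynomial `𝔉ᵐ_a`. -/
def mslide (m : ℕ) {k : ℕ} (a : Fin k → ℕ) : Pol :=
  ∑ᶠ b ∈ {b : Fin k → ℕ | MCompat m a b}, ∏ j, X (b j)

/-- Value of the `m`-slide creator `B^{(m)}_{a+1}` (paper indexing) on the monomial with
exponent vector `d`. -/
def BmMono (m a : ℕ) (d : ℕ →₀ ℕ) : Pol :=
  if ∃ t, a < t ∧ d t ≠ 0 then 0
  else monomial (d.erase a) 1 *
    ∑ r ∈ Finset.range (a+1),
      if r * m ≤ a ∧ ∀ t, t < a → d t ≠ 0 → t < a - r * m then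
        X (a - r * m) ^ (d a + 1) else 0

/-- The `m`-slide creator `B^{(m)}_{a+1}` (paper indexing), extended linearly from
its values on monomials. -/
def Bm (m a : ℕ) (f : Pol) : Pol := ∑ d ∈ f.support, C (f.coeff d) * BmMono m a d

end

open Finset in
lemma BS_X (i j : ℕ) : BS i (X j) = if j < i then X j else if j = i then 0 else X (j-1) := by
  simp [BS]

lemma BS_swapVar (i : ℕ) (f : Pol) : BS i (swapVar i f) = BS (i+1) f := by
  have h : (BS i).comp (rename (Equiv.swap i (i+1))) = BS (i+1) := by
    apply MvPolynomial.algHom_ext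
    intro j
    simp only [AlgHom.comp_apply, rename_X, BS_X, BS]
    rcases eq_or_ne j i with rfl | h1
    · simp [Equiv.swap_apply_left, BS_X]
    rcases eq_or_ne j (i+1) with rfl | h2
    · simp [Equiv.swap_apply_right, BS_X]
    · rw [Equiv.swap_apply_of_ne_of_ne h1 h2]
      simp only [aeval_X]
      split_ifs <;> first | rfl | omega
  exact DFunLike.congr_fun h f

lemma Xsub_ne (i : ℕ) : (X i - X (i+1) : Pol) ≠ 0 :=
  sub_ne_zero.mpr (fun h => by simpa using X_injective h)

lemma key_exists (i : ℕ) (f : Pol) :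
    ∃ h : Pol, (X i - X (i+1)) * h = f - swapVar i f ∧
      BS (i+1) f - BS i f = X i * BS i h := by
  induction f using MvPolynomial.induction_on with
  | C a =>
      refine ⟨0, ?_, ?_⟩ <;> simp [swapVar]
  | add p q hp hq =>
      obtain ⟨h1, e1, e2⟩ := hp
      obtain ⟨h2, e3, e4⟩ := hq
      refine ⟨h1 + h2, ?_, ?_⟩
      · rw [mul_add, e1, e3]; simp [swapVar]; ring
      · rw [map_add, map_add, map_add, mul_add, ← e2, ← e4]; ring
  | mul_X p n hp =>
      obtain ⟨h, e1, e2⟩ := hp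
      obtain ⟨hx, f1, f2⟩ : ∃ hx : Pol, (X i - X (i+1)) * hx = X n - swapVar i (X n) ∧
          BS (i+1) (X n) - BS i (X n) = X i * BS i hx := by
        rcases eq_or_ne n i with rfl | h1
        · refine ⟨1, ?_, ?_⟩
          · simp [swapVar, Equiv.swap_apply_left]
          · simp [BS_X]
        rcases eq_or_ne n (i+1) with rfl | h2
        · refine ⟨-1, ?_, ?_⟩
          · simp [swapVar, Equiv.swap_apply_right]
            try ring
          · simp [BS_X]
        · refine ⟨0, ?_, ?_⟩
          · simp [swapVar, Equiv.swap_apply_of_ne_of_ne h1 h2]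
          · simp only [BS_X, mul_zero, map_zero]
            split_ifs <;> first | omega | ring_nf
      refine ⟨h * X n + swapVar i p * hx, ?_, ?_⟩
      · have : swapVar i (p * X n) = swapVar i p * swapVar i (X n) := by
          simp [swapVar]
        rw [this, mul_add, ← mul_assoc, e1, mul_left_comm, f1]
        ring
      · rw [map_mul, map_mul, map_add, map_mul, map_mul, BS_swapVar]
        calc BS (i+1) p * BS (i+1) (X n) - BS i p * BS i (X n)
            = (BS (i+1) p - BS i p) * BS i (X n)
              + BS (i+1) p * (BS (i+1) (X n) - BS i (X n)) := by ring
          _ = X i * (BS i h * BS i (X n) + BS (i+1) p * BS i hx) := by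
              rw [e2, f2]; ring

lemma ddiff_eq (i : ℕ) {f h : Pol} (e : (X i - X (i+1)) * h = f - swapVar i f) :
    ddiff i f = h := by
  have hex : ∃ g : Pol, (X i - X (i+1)) * g = f - swapVar i f := ⟨h, e⟩
  rw [ddiff, exactDiv, dif_pos hex]
  exact mul_left_cancel₀ (Xsub_ne i) (hex.choose_spec.trans e.symm)

lemma ddiff_key (i : ℕ) (f : Pol) :
    BS (i+1) f - BS i f = X i * BS i (ddiff i f) := by
  obtain ⟨h, e1, e2⟩ := key_exists i f
  rw [ddiff_eq i e1]; exact e2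

lemma swapVar_eq_of_ddiff_zero {i : ℕ} {f : Pol} (h0 : ddiff i f = 0) :
    swapVar i f = f := by
  obtain ⟨h, e1, _⟩ := key_exists i f
  rw [ddiff_eq i e1] at h0
  subst h0
  rw [mul_zero] at e1
  exact (sub_eq_zero.mp e1.symm).symm

lemma BS_succ_eq_of_ddiff_zero {i : ℕ} {f : Pol} (h0 : ddiff i f = 0) :
    BS (i+1) f = BS i f := by
  rw [← BS_swapVar, swapVar_eq_of_ddiff_zero h0]

lemma BS_fix {n : ℕ} {f : Pol} (hf : ∀ j ∈ f.vars, j < n) : BS n f = f := by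
  have : BS n f = aeval X f := by
    rw [BS, aeval_def, aeval_def]
    apply eval₂Hom_congr' rfl _ rfl
    intro j hj _
    rw [if_pos (hf j hj)]
  rw [this, aeval_X_left_apply]

lemma finSupp_mul_swap {w : Equiv.Perm ℕ} (hw : FinSupp w) (i : ℕ) :
    FinSupp (w * Equiv.swap i (i+1)) := by
  apply Set.Finite.subset (hw.union ((Set.finite_singleton (i+1)).insert i))
  intro x hx
  by_cases h : x = i ∨ x = i + 1
  · right; rcases h with h|h <;> simp [h]
  · push_neg at h
    left
    simpa [Equiv.Perm.mul_apply, Equiv.swap_apply_of_ne_of_ne h.1 h.2] using hx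

theorem stmt_4' (S : Equiv.Perm ℕ → Pol) (hS : IsSchubertFamily S)
    (w : Equiv.Perm ℕ) (hw : FinSupp w) :
    (S w = BS 0 (S w) +
      ∑ᶠ i ∈ {i : ℕ | w (i+1) < w i}, X i * BS i (S (w * Equiv.swap i (i+1)))) ∧
    (S w = BS 0 (S w) +
      ∑ᶠ i ∈ {i : ℕ | w (i+1) < w i}, X i * BS (i+1) (S (w * Equiv.swap i (i+1)))) := by
  have hdd := hS.2.2
  set t := hw.toFinset with ht
  set n := max (t.sup id + 1) ((S w).vars.sup id + 1) with hn
  have hwfix : ∀ x, n ≤ x → w x = x := by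
    intro x hx
    by_contra hne
    have hx2 : x ∈ t := hw.mem_toFinset.mpr hne
    have := Finset.le_sup (f := id) hx2
    simp only [id] at this
    omega
  have hvars : ∀ j ∈ (S w).vars, j < n := by
    intro j hj
    have := Finset.le_sup (f := id) hj
    simp only [id] at this
    omega
  have tele : S w = BS 0 (S w) + ∑ i ∈ Finset.range n, X i * BS i (ddiff i (S w)) := by
    have h1 : ∀ i, X i * BS i (ddiff i (S w)) = BS (i+1) (S w) - BS i (S w) :=
      fun i => (ddiff_key i (S w)).symm
    simp_rw [h1]
    rw [Finset.sum_range_sub (fun i => BS i (S w)), BS_fix hvars]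
    ring
  have hterm : ∀ i, X i * BS i (ddiff i (S w)) =
      if w (i+1) < w i then X i * BS i (S (w * Equiv.swap i (i+1))) else 0 := by
    intro i
    rw [hdd w hw i]
    split_ifs <;> simp
  have hsetfin : {i : ℕ | w (i+1) < w i} =
      ↑((Finset.range n).filter fun i => w (i+1) < w i) := by
    ext i
    simp only [Set.mem_setOf_eq, Finset.coe_filter, Finset.mem_range]
    refine ⟨fun hi => ⟨?_, hi⟩, fun h => h.2⟩
    by_contra hni
    push_neg at hni
    rw [hwfix i hni, hwfix (i+1) (by omega)] at hi
    omega
  have hnodesc : ∀ i, w (i+1) < w i →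
      BS (i+1) (S (w * Equiv.swap i (i+1))) = BS i (S (w * Equiv.swap i (i+1))) := by
    intro i hi
    apply BS_succ_eq_of_ddiff_zero
    have h1 : (w * Equiv.swap i (i+1)) (i+1) = w i := by
      simp [Equiv.Perm.mul_apply]
    have h2 : (w * Equiv.swap i (i+1)) i = w (i+1) := by
      simp [Equiv.Perm.mul_apply]
    rw [hdd _ (finSupp_mul_swap hw i) i, if_neg (by rw [h1, h2]; omega)]
  constructor
  · rw [hsetfin, finsum_mem_coe_finset, Finset.sum_filter]
    conv_lhs => rw [tele]
    congr 1
    exact Finset.sum_congr rfl fun i _ => hterm i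
  · rw [hsetfin, finsum_mem_coe_finset, Finset.sum_filter]
    conv_lhs => rw [tele]
    congr 1
    refine Finset.sum_congr rfl fun i _ => ?_
    rw [hterm i]
    split_ifs with h
    · rw [hnodesc i h]
    · rfl

/-- the recursions `𝔖_w = R₁𝔖_w + Σ_{i∈Des(w)} x_i·R_i(𝔖_{ws_i})` and
`𝔖_w = R₁𝔖_w + Σ_{i∈Des(w)} x_i·R_{i+1}(𝔖_{ws_i})`. -/
theorem stmt_4 (S : Equiv.Perm ℕ → Pol) (hS : IsSchubertFamily S)
    (w : Equiv.Perm ℕ) (hw : FinSupp w) :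
    (S w = BS 0 (S w) +
      ∑ᶠ i ∈ {i : ℕ | w (i+1) < w i}, X i * BS i (S (w * Equiv.swap i (i+1)))) ∧
    (S w = BS 0 (S w) +
      ∑ᶠ i ∈ {i : ℕ | w (i+1) < w i}, X i * BS (i+1) (S (w * Equiv.swap i (i+1)))) := stmt_4' S hS w hw
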